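/- arXiv:1612.06072 — 2 statements merged into one kernel-verified Lean document; each statement's English description precedes it below -/
import Mathlib

section
/- Let α = (j₁,j₂,…) be a sequence of integers greater than 1 and set m_i = j₁·j₂·⋯·j_i for each i. Let F = {X; f_λ | λ ∈ Λ} be an IFS on a compact metric space X. Then F_σ is topologically conjugate to the adding machine map g_α for every σ ∈ Λ^ℕ if and only if the following three properties hold: (1) for each positive integer i there is a cover P_i of X consisting of m_i pairwise disjoint, nonempty, clopen sets which are cyclically permuted by F; (2) for each positive integer i, P_{i+1} partitions P_i (each element of P_i is the union of those elements of P_{i+1} contained in it); (3) whenever V₁ ⊇ V₂ ⊇ V₃ ⊇ … is a nested sequence with V_i ∈ P_i for each i, the intersection ⋂_{i=1}^∞ V_i consists of a single point. -/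
set_option synthInstance.maxHeartbeats 1000000
set_option maxHeartbeats 1000000
set_option linter.unusedVariables false
set_option linter.unusedSectionVars false


open Set Function Topology

/-- `F_{σ_n} = f_{λ_n} ∘ ⋯ ∘ f_{λ_1}` for `σ = (λ_1, λ_2, …)`. -/
def ifsComp {X Λ : Type*} (f : Λ → X → X) (σ : ℕ → Λ) : ℕ → X → X
  | 0 => id
  | n + 1 => f (σ n) ∘ ifsComp f σ n

/-- `F(A) = ⋃_{λ ∈ Λ} f_λ(A)`. -/
def ifsImage {X Λ : Type*} (f : Λ → X → X) (A : Set X) : Set X := ⋃ l : Λ, f l '' A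

/-- `M` is an `F^n`-minimal set. -/
def IsMinimalSetIFS {X Λ : Type*} [TopologicalSpace X] (f : Λ → X → X) (n : ℕ) (M : Set X) :
    Prop :=
  M.Nonempty ∧ IsClosed M ∧ (∀ σ : ℕ → Λ, ifsComp f σ n '' M = M) ∧
    ∀ A : Set X, A.Nonempty → A ⊂ M → ∀ σ : ℕ → Λ, ifsComp f σ n '' A ≠ A

/-- The IFS `F` is minimal: the only `F^1`-minimal set is the whole space. -/
def IFSMinimal {X Λ : Type*} [TopologicalSpace X] (f : Λ → X → X) : Prop :=
  ∀ M : Set X, IsMinimalSetIFS f 1 M ↔ M = Set.univ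

/-- `x` is regularly recurrent for the IFS `F`. -/
def IFSRegularlyRecurrent {X Λ : Type*} [TopologicalSpace X] (f : Λ → X → X) (x : X) : Prop :=
  ∀ U ∈ 𝓝 x, ∃ n : ℕ, 1 ≤ n ∧ ∀ (i : ℕ) (σ : ℕ → Λ), ifsComp f σ (n * i) x ∈ U

/-- `x` is a periodic point of the IFS `F`. -/
def IFSPeriodic {X Λ : Type*} (f : Λ → X → X) (x : X) : Prop :=
  ∃ (n : ℕ) (σ : ℕ → Λ), 1 ≤ n ∧ ifsComp f σ n x = x

/-- `NM(F)`: positive integers `n` such that some set is `F^n`-minimal but not `F^j`-minimal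
for any `1 ≤ j ≤ n-1`. -/
def NMSet {X Λ : Type*} [TopologicalSpace X] (f : Λ → X → X) : Set ℕ :=
  {n | 1 ≤ n ∧ ∃ M : Set X, IsMinimalSetIFS f n M ∧
    ∀ j : ℕ, 1 ≤ j → j < n → ¬ IsMinimalSetIFS f j M}

/-- The carry sequence when adding `(1,0,0,…)` to `r` in `Δ_α`. -/
def addCarry (α : ℕ → ℕ) (r : ∀ i, Fin (α i)) : ℕ → ℕ
  | 0 => 1
  | i + 1 => if α i ≤ (r i).val + addCarry α r i then 1 else 0

/-- The adding machine map `g_α : Δ_α → Δ_α`, `g_α(r) = r + (1,0,0,…)`. -/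
def addingMachine (α : ℕ → ℕ) (r : ∀ i, Fin (α i)) : ∀ i, Fin (α i) :=
  fun i => ⟨((r i).val + addCarry α r i) % α i, Nat.mod_lt _ (r i).pos⟩
namespace Odo

variable (α : ℕ → ℕ)

/-- mixed radix base -/
def mrad (i : ℕ) : ℕ := ∏ k ∈ Finset.range i, α k

variable {α}

lemma mrad_zero : mrad α 0 = 1 := rfl

lemma mrad_succ (i : ℕ) : mrad α (i+1) = mrad α i * α i := Finset.prod_range_succ _ _

lemma mrad_pos (hα : ∀ i, 2 ≤ α i) (i : ℕ) : 0 < mrad α i := by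
  induction i with
  | zero => simp [mrad_zero]
  | succ i ih => rw [mrad_succ]; exact Nat.mul_pos ih (lt_of_lt_of_le two_pos (hα i))

lemma mrad_dvd (i : ℕ) : mrad α i ∣ mrad α (i+1) := ⟨α i, mrad_succ i⟩

lemma carry_succ (r : ∀ i, Fin (α i)) (i : ℕ) :
    addCarry α r (i+1) = if α i ≤ (r i).val + addCarry α r i then 1 else 0 := rfl

variable (α) in
/-- value of first `i` digits -/
def val (i : ℕ) (r : ∀ i, Fin (α i)) : ℕ := ∑ k ∈ Finset.range i, (r k).val * mrad α k

lemma val_zero (r : ∀ i, Fin (α i)) : val α 0 r = 0 := rfl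

lemma val_succ (i : ℕ) (r : ∀ i, Fin (α i)) :
    val α (i+1) r = val α i r + (r i).val * mrad α i := Finset.sum_range_succ _ _

lemma val_lt (hα : ∀ i, 2 ≤ α i) (i : ℕ) (r : ∀ i, Fin (α i)) : val α i r < mrad α i := by
  induction i with
  | zero => simp [val_zero, mrad_zero]
  | succ i ih =>
    rw [val_succ, mrad_succ]
    have h3 : ((r i).val + 1) * mrad α i ≤ α i * mrad α i :=
      Nat.mul_le_mul_right _ (Nat.succ_le_of_lt (r i).isLt)
    rw [Nat.add_mul, one_mul] at h3
    rw [Nat.mul_comm (mrad α i) (α i)]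
    omega

lemma val_mod (hα : ∀ i, 2 ≤ α i) (i : ℕ) (r : ∀ i, Fin (α i)) :
    val α i r = val α (i+1) r % mrad α i := by
  rw [val_succ, Nat.add_mul_mod_self_right, Nat.mod_eq_of_lt (val_lt hα i r)]

lemma digits_eq_of_val_eq (hα : ∀ i, 2 ≤ α i) {r s : ∀ i, Fin (α i)} {i : ℕ}
    (h : val α i r = val α i s) : ∀ k, k < i → r k = s k := by
  induction i with
  | zero => intro k hk; omega
  | succ i ih =>
    have hmod : val α i r = val α i s := by
      rw [val_mod hα i r, val_mod hα i s, h]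
    have hdig : (r i).val = (s i).val := by
      have := val_succ i r; have := val_succ i s
      have hr := val_lt hα i r; have hs := val_lt hα i s
      have hpos := mrad_pos hα i
      -- from h : val i r + ri * m = val i s + si * m and val i r = val i s
      have h2 : (r i).val * mrad α i = (s i).val * mrad α i := by
        have := h; rw [val_succ, val_succ, hmod] at this; omega
      exact Nat.eq_of_mul_eq_mul_right hpos h2
    intro k hk
    rcases Nat.lt_succ_iff_lt_or_eq.mp hk with h' | h'
    · exact ih hmod k h'
    · subst h'; exact Fin.ext hdig

lemma eq_of_forall_val_eq (hα : ∀ i, 2 ≤ α i) {r s : ∀ i, Fin (α i)}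
    (h : ∀ i, val α i r = val α i s) : r = s := by
  funext k
  exact digits_eq_of_val_eq hα (h (k+1)) k (Nat.lt_succ_self k)

lemma addCarry_le_one (r : ∀ i, Fin (α i)) (i : ℕ) : addCarry α r i ≤ 1 := by
  cases i with
  | zero => exact le_refl 1
  | succ i => unfold addCarry; split <;> omega

/-- key carry identity -/
lemma val_addingMachine (hα : ∀ i, 2 ≤ α i) (i : ℕ) (r : ∀ i, Fin (α i)) :
    val α i (addingMachine α r) + addCarry α r i * mrad α i = val α i r + 1 := by
  induction i with
  | zero => simp [val_zero, addCarry, mrad_zero]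
  | succ i ih =>
    have hc := addCarry_le_one r i
    have hri := (r i).isLt
    have hkey : ((r i).val + addCarry α r i) % α i + α i * addCarry α r (i+1)
        = (r i).val + addCarry α r i := by
      rw [carry_succ]
      split_ifs with hge
      · have h' : ((r i).val + addCarry α r i) % α i
            = (r i).val + addCarry α r i - α i := by
          rw [Nat.mod_eq_sub_mod hge, Nat.mod_eq_of_lt (by omega)]
        have := hα i
        omega
      · rw [Nat.mul_zero, Nat.add_zero, Nat.mod_eq_of_lt (by omega)]
    have hgdig : (addingMachine α r i).val = ((r i).val + addCarry α r i) % α i := rfl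
    rw [val_succ, val_succ, hgdig, mrad_succ]
    -- goal: val i (g r) + ((ri + c)%α) * m + c' * (m * α) = val i r + ri*m + 1
    -- ih : val i (g r) + c * m = val i r + 1
    nlinarith [ih, hkey, mrad_pos hα i]

lemma val_addingMachine_mod (hα : ∀ i, 2 ≤ α i) (i : ℕ) (r : ∀ i, Fin (α i)) :
    val α i (addingMachine α r) = (val α i r + 1) % mrad α i := by
  have h := val_addingMachine hα i r
  have h1 := val_lt hα i (addingMachine α r)
  have h2 := val_lt hα i r
  have hc := addCarry_le_one r i
  interval_cases h' : addCarry α r i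
  · rw [Nat.mod_eq_of_lt] <;> omega
  · have : val α i r + 1 = val α i (addingMachine α r) + mrad α i := by omega
    rw [this, Nat.add_mod_right, Nat.mod_eq_of_lt h1]

lemma val_iterate (hα : ∀ i, 2 ≤ α i) (i n : ℕ) (r : ∀ i, Fin (α i)) :
    val α i ((addingMachine α)^[n] r) = (val α i r + n) % mrad α i := by
  induction n with
  | zero => simp [Nat.mod_eq_of_lt (val_lt hα i r)]
  | succ n ih =>
    rw [Function.iterate_succ_apply', val_addingMachine_mod hα, ih,
      Nat.mod_add_mod]
    ring_nf

/-- digit expansion of a natural number -/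
def rdig (hα : ∀ i, 2 ≤ α i) (j : ℕ) : ∀ i, Fin (α i) :=
  fun k => ⟨(j / mrad α k) % α k, Nat.mod_lt _ (by have := hα k; omega)⟩

lemma val_rdig (hα : ∀ i, 2 ≤ α i) (j i : ℕ) : val α i (rdig hα j) = j % mrad α i := by
  induction i with
  | zero => simp [val_zero, mrad_zero, Nat.mod_one]
  | succ i ih =>
    rw [val_succ, ih, mrad_succ, Nat.mod_mul]
    simp [rdig]
    ring

/-! topology -/

lemma carry_congr {r s : ∀ i, Fin (α i)} (i : ℕ) (h : ∀ k, k < i → r k = s k) :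
    addCarry α r i = addCarry α s i := by
  induction i with
  | zero => rfl
  | succ i ih =>
    rw [carry_succ, carry_succ, h i (Nat.lt_succ_self i),
      ih (fun k hk => h k (Nat.lt_succ_of_lt hk))]

lemma val_congr {r s : ∀ i, Fin (α i)} (i : ℕ) (h : ∀ k, k < i → r k = s k) :
    val α i r = val α i s := by
  unfold val
  exact Finset.sum_congr rfl (fun k hk => by rw [h k (Finset.mem_range.mp hk)])

/-- cylinder neighborhoods -/
def cyl (r : ∀ i, Fin (α i)) (i : ℕ) : Set (∀ i, Fin (α i)) :=
  {s | ∀ k, k < i → s k = r k}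

lemma isOpen_cyl (r : ∀ i, Fin (α i)) (i : ℕ) : IsOpen (cyl r i) := by
  have : cyl r i = ⋂ k ∈ Finset.range i, (fun s : ∀ i, Fin (α i) => s k) ⁻¹' {r k} := by
    ext s; simp [cyl]
  rw [this]
  exact isOpen_biInter_finset fun k _ =>
    (continuous_apply k).isOpen_preimage _ (isOpen_discrete _)

lemma mem_cyl_self (r : ∀ i, Fin (α i)) (i : ℕ) : r ∈ cyl r i := fun _ _ => rfl

lemma isLocallyConstant_val (i : ℕ) : IsLocallyConstant (val α i) := by
  rw [IsLocallyConstant.iff_exists_open]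
  intro r
  exact ⟨cyl r i, isOpen_cyl r i, mem_cyl_self r i, fun s hs => val_congr i hs⟩

lemma continuous_val (i : ℕ) : Continuous (val α i) := (isLocallyConstant_val i).continuous

lemma continuous_addingMachine : Continuous (addingMachine α) := by
  apply continuous_pi
  intro i
  apply IsLocallyConstant.continuous
  rw [IsLocallyConstant.iff_exists_open]
  intro r
  refine ⟨cyl r (i+1), isOpen_cyl r (i+1), mem_cyl_self r (i+1), fun s hs => ?_⟩
  have h1 : s i = r i := hs i (Nat.lt_succ_self i)
  have h2 : addCarry α s i = addCarry α r i :=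
    carry_congr i (fun k hk => hs k (Nat.lt_succ_of_lt hk))
  show (⟨((s i).val + addCarry α s i) % α i, _⟩ : Fin (α i)) = ⟨((r i).val + addCarry α r i) % α i, _⟩
  simp [h1, h2]

/-- every forward orbit of the adding machine is dense -/
lemma dense_orbit (hα : ∀ i, 2 ≤ α i) (r : ∀ i, Fin (α i)) :
    Dense (Set.range fun n => (addingMachine α)^[n] r) := by
  intro s
  rw [mem_closure_iff]
  intro U hU hsU
  obtain ⟨I, u, hu, hsub⟩ := isOpen_pi_iff.mp hU s hsU
  set i : ℕ := (I.sup id) + 1 with hi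
  have hIlt : ∀ a ∈ I, a < i := fun a ha => Nat.lt_succ_of_le (Finset.le_sup (f := id) ha)
  -- choose n moving val to val of s
  have hvr := val_lt hα i r
  have hvs := val_lt hα i s
  set n : ℕ := val α i s + (mrad α i - val α i r) with hn
  have hval : val α i ((addingMachine α)^[n] r) = val α i s := by
    rw [val_iterate hα]
    have : val α i r + n = val α i s + mrad α i := by omega
    rw [this, Nat.add_mod_right, Nat.mod_eq_of_lt hvs]
  have hdig := digits_eq_of_val_eq hα hval
  refine ⟨(addingMachine α)^[n] r, ?_, ⟨n, rfl⟩⟩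
  apply hsub
  intro a ha
  rw [hdig a (hIlt a ha)]
  exact (hu a ha).2

lemma surjective_addingMachine (hα : ∀ i, 2 ≤ α i) :
    Function.Surjective (addingMachine α) := by
  intro s
  haveI : CompactSpace (∀ i, Fin (α i)) := inferInstance
  have hcl : IsClosed (Set.range (addingMachine α)) :=
    (isCompact_range (continuous_addingMachine)).isClosed
  have hdense : Dense (Set.range fun n => (addingMachine α)^[n+1] s) := by
    have hd := dense_orbit hα (addingMachine α s)
    have heq : (Set.range fun n => (addingMachine α)^[n+1] s)
        = Set.range fun n => (addingMachine α)^[n] (addingMachine α s) := by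
      ext t
      constructor
      · rintro ⟨n, rfl⟩; exact ⟨n, (Function.iterate_succ_apply _ _ _).symm⟩
      · rintro ⟨n, rfl⟩; exact ⟨n, Function.iterate_succ_apply _ _ _⟩
    rw [heq]; exact hd
  have hsub : (Set.range fun n => (addingMachine α)^[n+1] s) ⊆ Set.range (addingMachine α) := by
    rintro t ⟨n, rfl⟩
    exact ⟨(addingMachine α)^[n] s, (Function.iterate_succ_apply' _ _ _).symm⟩
  have huniv : (Set.univ : Set (∀ i, Fin (α i))) ⊆ Set.range (addingMachine α) := by
    rw [← hdense.closure_eq]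
    exact hcl.closure_subset_iff.mpr hsub
  exact huniv (Set.mem_univ s)

end Odo

open Odo

section Forward

variable {X Λ : Type*} [MetricSpace X] [CompactSpace X] [Nonempty Λ]
variable {f : Λ → X → X} {α : ℕ → ℕ}

/-- pointwise form of the conjugacy -/
lemma conj_pt {σ : ℕ → Λ} {h : X ≃ₜ (∀ i, Fin (α i))}
    (hh : ∀ n : ℕ, 1 ≤ n → (addingMachine α)^[n] ∘ h = h ∘ ifsComp f σ n) :
    ∀ (n : ℕ) (x : X), h (ifsComp f σ n x) = (addingMachine α)^[n] (h x) := by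
  intro n x
  cases n with
  | zero => rfl
  | succ n => exact (congrFun (hh (n+1) (by omega)) x).symm

lemma ifsComp_cons (l l₀ : Λ) (n : ℕ) (x : X) :
    ifsComp f (fun k => if k = 0 then l else l₀) (n+1) x
      = ifsComp f (fun _ => l₀) n (f l x) := by
  induction n with
  | zero => rfl
  | succ n ih =>
    show f _ (ifsComp f _ (n+1) x) = f l₀ (ifsComp f (fun _ => l₀) n (f l x))
    rw [ih]
    rfl

theorem forward_dir (hα : ∀ i, 2 ≤ α i)
    (H : ∀ σ : ℕ → Λ, ∃ h : X ≃ₜ (∀ i, Fin (α i)),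
        ∀ n : ℕ, 1 ≤ n → (addingMachine α)^[n] ∘ h = h ∘ ifsComp f σ n) :
      ∃ P : ℕ → ℕ → Set X,
        (∀ i, 1 ≤ i →
          (∀ j, j < mrad α i → (P i j).Nonempty ∧ IsClopen (P i j)) ∧
          (∀ j, j < mrad α i → ∀ k, k < mrad α i → j ≠ k → Disjoint (P i j) (P i k)) ∧
          (⋃ j ∈ Finset.range (mrad α i), P i j) = Set.univ ∧
          (∀ (l : Λ) (j : ℕ), j < mrad α i → f l '' P i j = P i ((j + 1) % mrad α i))) ∧
        (∀ i, 1 ≤ i → ∀ k, k < mrad α i →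
          P i k = ⋃ j ∈ {j : ℕ | j < mrad α (i + 1) ∧ P (i + 1) j ⊆ P i k}, P (i + 1) j) ∧
        (∀ V : ℕ → Set X, (∀ i, 1 ≤ i → ∃ j, j < mrad α i ∧ V i = P i j) →
          (∀ i, 1 ≤ i → V (i + 1) ⊆ V i) →
          ∃ x : X, (⋂ i, ⋂ (_ : 1 ≤ i), V i) = {x}) := by
  classical
  obtain ⟨l₀⟩ := ‹Nonempty Λ›
  set σs : ℕ → Λ := fun _ => l₀ with hσs
  obtain ⟨A, hA⟩ := H σs
  -- value functions
  set vA : ℕ → X → ℕ := fun i x => val α i (A x) with hvA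
  have hAF : ∀ (n : ℕ) (x : X), A (ifsComp f σs n x) = (addingMachine α)^[n] (A x) :=
    conj_pt hA
  have hvAF : ∀ (i n : ℕ) (x : X), vA i (ifsComp f σs n x) = (vA i x + n) % mrad α i := by
    intro i n x
    simp only [hvA, hAF n x, val_iterate hα]
  have hvAlt : ∀ (i : ℕ) (x : X), vA i x < mrad α i := fun i x => val_lt hα i (A x)
  -- per-letter conjugacies
  have hB : ∀ l : Λ, ∃ B : X ≃ₜ (∀ i, Fin (α i)),
      (∀ (n : ℕ) (x : X), B (ifsComp f (fun k => if k = 0 then l else l₀) n x)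
          = (addingMachine α)^[n] (B x)) ∧ Function.Surjective (f l) := by
    intro l
    obtain ⟨B, hB⟩ := H (fun k => if k = 0 then l else l₀)
    have hBpt := conj_pt hB
    have hstep : ∀ x, B (f l x) = addingMachine α (B x) := by
      intro x
      have h1 := hBpt 1 x
      exact h1
    refine ⟨B, hBpt, ?_⟩
    intro z
    obtain ⟨w, hw⟩ := surjective_addingMachine hα (B z)
    refine ⟨B.symm w, B.injective ?_⟩
    rw [hstep, B.apply_symm_apply, hw]
  -- the crucial "difference is constant" lemma, via minimality of the odometer
  have hkey : ∀ (l : Λ) (i : ℕ) (x : X), vA i (f l x) = (vA i x + 1) % mrad α i := by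
    intro l i x
    obtain ⟨B, hBpt, hBsurj⟩ := hB l
    set vB : X → ℕ := fun y => val α i (B y) with hvB'
    have hvBlt : ∀ y, vB y < mrad α i := fun y => val_lt hα i (B y)
    have hvBf : ∀ y, vB (f l y) = (vB y + 1) % mrad α i := by
      intro y
      have h1 := hBpt 1 y
      have h2 : ifsComp f (fun k => if k = 0 then l else l₀) 1 y = f l y := rfl
      rw [h2] at h1
      simp only [hvB', h1]
      have := val_iterate hα i 1 (B y)
      simpa using this
    -- B also advances by n along σs-orbits
    have hvBF : ∀ (n : ℕ) (y : X), vB (ifsComp f σs n y) = (vB y + n) % mrad α i := by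
      intro n y
      obtain ⟨w, rfl⟩ := hBsurj y
      have hc : ifsComp f σs n (f l w) = ifsComp f (fun k => if k = 0 then l else l₀) (n+1) w :=
        (ifsComp_cons l l₀ n w).symm
      have h1 : vB (ifsComp f σs n (f l w)) = (vB w + (n+1)) % mrad α i := by
        rw [hc]
        simp only [hvB', hBpt (n+1) w, val_iterate hα]
      rw [h1, hvBf w, Nat.mod_add_mod]
      ring_nf
    -- the difference cocycle is constant: ∀ x y, vA x + vB y ≡ vA y + vB x [MOD m i]
    have hconst : ∀ x' : X, vA i x' + vB x ≡ vA i x + vB x' [MOD mrad α i] := by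
      intro x'
      set S : Set X := {z | vA i z + vB x ≡ vA i x + vB z [MOD mrad α i]} with hS
      have hScl : IsClosed S := by
        have hΦ : Continuous fun z : X => (vA i z, vB z) :=
          ((continuous_val i).comp A.continuous).prodMk
            ((continuous_val i).comp B.continuous)
        have : S = (fun z : X => (vA i z, vB z)) ⁻¹'
            {p : ℕ × ℕ | p.1 + vB x ≡ vA i x + p.2 [MOD mrad α i]} := rfl
        rw [this]
        exact (isClosed_discrete _).preimage hΦ
      have hSorb : ∀ n : ℕ, ifsComp f σs n x ∈ S := by
        intro n
        show vA i (ifsComp f σs n x) + vB x ≡ vA i x + vB (ifsComp f σs n x) [MOD mrad α i]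
        rw [hvAF i n x, hvBF n x]
        calc (vA i x + n) % mrad α i + vB x
            ≡ vA i x + n + vB x [MOD mrad α i] := (Nat.mod_modEq _ _).add_right _
          _ = vA i x + (vB x + n) := by ring
          _ ≡ vA i x + (vB x + n) % mrad α i [MOD mrad α i] :=
              ((Nat.mod_modEq _ _).symm).add_left _
      -- orbit of x is dense in X
      have hdense : Dense (Set.range fun n => ifsComp f σs n x) := by
        have hd : Dense (Set.range fun n => (addingMachine α)^[n] (A x)) :=
          dense_orbit hα (A x)
        have him : (Set.range fun n => ifsComp f σs n x)
            = A ⁻¹' (Set.range fun n => (addingMachine α)^[n] (A x)) := by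
          ext z
          constructor
          · rintro ⟨n, rfl⟩
            exact ⟨n, (hAF n x).symm⟩
          · rintro ⟨n, hn⟩
            refine ⟨n, A.injective ?_⟩
            rw [hAF n x]
            exact hn
        rw [him]
        intro z
        rw [← A.preimage_closure, hd.closure_eq]
        exact Set.mem_preimage.mpr trivial
      have hSuniv : S = Set.univ := by
        apply Set.eq_univ_of_forall
        intro z
        have h1 : closure (Set.range fun n => ifsComp f σs n x) ⊆ S :=
          hScl.closure_subset_iff.mpr (by rintro t ⟨n, rfl⟩; exact hSorb n)
        exact h1 (by rw [hdense.closure_eq]; trivial)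
      have := hSuniv ▸ Set.mem_univ x'
      exact this
    -- conclude
    have h1 : vA i (f l x) + vB x ≡ vA i x + vB (f l x) [MOD mrad α i] := hconst (f l x)
    have h2 : vA i x + vB (f l x) ≡ vA i x + (vB x + 1) [MOD mrad α i] := by
      rw [hvBf x]
      exact ((Nat.mod_modEq _ _)).add_left _
    have h3 : vA i (f l x) + vB x ≡ (vA i x + 1) + vB x [MOD mrad α i] := by
      calc vA i (f l x) + vB x ≡ vA i x + (vB x + 1) [MOD mrad α i] := h1.trans h2
        _ = (vA i x + 1) + vB x := by ring
    have h4 : vA i (f l x) ≡ vA i x + 1 [MOD mrad α i] := h3.add_right_cancel' _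
    have h5 := hvAlt i (f l x)
    calc vA i (f l x) = vA i (f l x) % mrad α i := (Nat.mod_eq_of_lt h5).symm
      _ = (vA i x + 1) % mrad α i := h4
  -- surjectivity of each f l
  have hfsurj : ∀ l : Λ, Function.Surjective (f l) := fun l => (hB l).choose_spec.2
  -- define the partitions
  refine ⟨fun i j => {x | vA i x = j % mrad α i}, ?_, ?_, ?_⟩
  · -- property (1)
    intro i _hi
    have hm := mrad_pos hα i
    refine ⟨?_, ?_, ?_, ?_⟩
    · intro j hj
      constructor
      · refine ⟨A.symm (rdig hα j), ?_⟩
        show val α i (A (A.symm (rdig hα j))) = j % mrad α i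
        rw [A.apply_symm_apply, val_rdig hα]
      · show IsClopen ((vA i) ⁻¹' {j % mrad α i})
        exact (isClopen_discrete _).preimage ((continuous_val i).comp A.continuous)
    · intro j hj k hk hjk
      rw [Set.disjoint_left]
      intro x hx hx'
      exact hjk (by
        have h1 : vA i x = j % mrad α i := hx
        have h2 : vA i x = k % mrad α i := hx'
        rw [Nat.mod_eq_of_lt hj] at h1
        rw [Nat.mod_eq_of_lt hk] at h2
        omega)
    · apply Set.eq_univ_of_forall
      intro x
      simp only [Set.mem_iUnion, Finset.mem_range]
      exact ⟨vA i x, hvAlt i x, (Nat.mod_eq_of_lt (hvAlt i x)).symm⟩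
    · intro l j hj
      ext y
      constructor
      · rintro ⟨x, hx, rfl⟩
        show vA i (f l x) = (j+1) % mrad α i % mrad α i
        rw [hkey l i x, hx, Nat.mod_add_mod]
        exact (Nat.mod_mod_of_dvd _ dvd_rfl).symm
      · intro hy
        obtain ⟨x, rfl⟩ := hfsurj l y
        refine ⟨x, ?_, rfl⟩
        have h1 : vA i (f l x) = (j+1) % mrad α i % mrad α i := hy
        rw [hkey l i x, Nat.mod_mod_of_dvd _ dvd_rfl] at h1
        have h3 : vA i x ≡ j [MOD mrad α i] := Nat.ModEq.add_right_cancel' 1 h1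
        show vA i x = j % mrad α i
        exact (Nat.mod_eq_of_lt (hvAlt i x)).symm.trans h3
  · -- property (2): refinement
    intro i _hi k hk
    ext x
    simp only [Set.mem_iUnion, Set.mem_setOf_eq, exists_prop]
    constructor
    · intro hx
      refine ⟨vA (i+1) x, ⟨hvAlt (i+1) x, ?_⟩, ?_⟩
      · intro y hy
        have hy' : vA (i+1) y = vA (i+1) x % mrad α (i+1) := hy
        rw [Nat.mod_eq_of_lt (hvAlt (i+1) x)] at hy'
        show vA i y = k % mrad α i
        have h1 : vA i y = vA (i+1) y % mrad α i := val_mod hα i (A y)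
        have h2 : vA i x = vA (i+1) x % mrad α i := val_mod hα i (A x)
        rw [h1, hy', ← h2, hx]
      · show vA (i+1) x = vA (i+1) x % mrad α (i+1)
        rw [Nat.mod_eq_of_lt (hvAlt (i+1) x)]
    · rintro ⟨j, ⟨_hj, hsub⟩, hxj⟩
      exact hsub hxj
  · -- property (3): nested intersections are singletons
    intro V hV1 hV2
    set W : ℕ → Set X := fun n => V (n+1) with hW
    have hWP : ∀ n, ∃ j, j < mrad α (n+1) ∧ W n = {x : X | vA (n+1) x = j % mrad α (n+1)} :=
      fun n => hV1 (n+1) (by omega)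
    have hWne : ∀ n, (W n).Nonempty := by
      intro n
      obtain ⟨j, hj, hVj⟩ := hWP n
      rw [hVj]
      refine ⟨A.symm (rdig hα j), ?_⟩
      show val α (n+1) (A (A.symm (rdig hα j))) = j % mrad α (n+1)
      rw [A.apply_symm_apply, val_rdig hα]
    have hWcl : ∀ n, IsClosed (W n) := by
      intro n
      obtain ⟨j, hj, hVj⟩ := hWP n
      rw [hVj]
      have : {x : X | vA (n+1) x = j % mrad α (n+1)}
          = (vA (n+1)) ⁻¹' {j % mrad α (n+1)} := rfl
      rw [this]
      exact (isClosed_discrete _).preimage ((continuous_val (n+1)).comp A.continuous)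
    have hWmono : ∀ n, W (n+1) ⊆ W n := fun n => hV2 (n+1) (by omega)
    obtain ⟨x, hx⟩ := IsCompact.nonempty_iInter_of_sequence_nonempty_isCompact_isClosed
      W hWmono hWne ((hWcl 0).isCompact) hWcl
    have hxW := Set.mem_iInter.mp hx
    have hxV : ∀ i, 1 ≤ i → x ∈ V i := by
      intro i hi
      have := hxW (i-1)
      have heq : i - 1 + 1 = i := by omega
      rw [hW] at this
      simpa [heq] using this
    refine ⟨x, ?_⟩
    ext y
    simp only [Set.mem_iInter, Set.mem_singleton_iff]
    constructor
    · intro hy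
      have hval : ∀ i, val α i (A y) = val α i (A x) := by
        intro i
        cases i with
        | zero => rw [val_zero, val_zero]
        | succ i' =>
          obtain ⟨j, hj, hVj⟩ := hWP i'
          have hyW : y ∈ W i' := by rw [hW]; exact hy (i'+1) (by omega)
          have hxW' : x ∈ W i' := hxW i'
          rw [hVj] at hyW hxW'
          exact hyW.trans hxW'.symm
      exact A.injective (eq_of_forall_val_eq hα hval)
    · rintro rfl
      exact hxV

end Forward

section Backward

variable {X Λ : Type*} [MetricSpace X] [CompactSpace X] [Nonempty Λ]
variable {f : Λ → X → X} {α : ℕ → ℕ}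

theorem backward_dir (hα : ∀ i, 2 ≤ α i) (P : ℕ → ℕ → Set X)
    (h1 : ∀ i, 1 ≤ i →
          (∀ j, j < mrad α i → (P i j).Nonempty ∧ IsClopen (P i j)) ∧
          (∀ j, j < mrad α i → ∀ k, k < mrad α i → j ≠ k → Disjoint (P i j) (P i k)) ∧
          (⋃ j ∈ Finset.range (mrad α i), P i j) = Set.univ ∧
          (∀ (l : Λ) (j : ℕ), j < mrad α i → f l '' P i j = P i ((j + 1) % mrad α i)))
    (h2 : ∀ i, 1 ≤ i → ∀ k, k < mrad α i →
          P i k = ⋃ j ∈ {j : ℕ | j < mrad α (i + 1) ∧ P (i + 1) j ⊆ P i k}, P (i + 1) j)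
    (h3 : ∀ V : ℕ → Set X, (∀ i, 1 ≤ i → ∃ j, j < mrad α i ∧ V i = P i j) →
          (∀ i, 1 ≤ i → V (i + 1) ⊆ V i) →
          ∃ x : X, (⋂ i, ⋂ (_ : 1 ≤ i), V i) = {x}) :
    ∀ σ : ℕ → Λ, ∃ h : X ≃ₜ (∀ i, Fin (α i)),
        ∀ n : ℕ, 1 ≤ n → (addingMachine α)^[n] ∘ h = h ∘ ifsComp f σ n := by
  classical
  obtain ⟨l₀⟩ := ‹Nonempty Λ›
  have hmpos : ∀ i, 0 < mrad α i := mrad_pos hα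
  have hmsucc : ∀ i, mrad α (i+1) = mrad α i * α i := fun i => Finset.prod_range_succ _ _
  -- surjectivity of each f l
  have hsurj : ∀ l : Λ, Function.Surjective (f l) := by
    intro l z
    have hz : z ∈ ⋃ j ∈ Finset.range (mrad α 1), P 1 j := by
      rw [(h1 1 le_rfl).2.2.1]; trivial
    simp only [Set.mem_iUnion, Finset.mem_range, exists_prop] at hz
    obtain ⟨j, hj, hzj⟩ := hz
    set j' : ℕ := (j + mrad α 1 - 1) % mrad α 1 with hj'
    have hj'lt : j' < mrad α 1 := Nat.mod_lt _ (hmpos 1)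
    have hstep : (j' + 1) % mrad α 1 = j := by
      rw [hj', Nat.mod_add_mod]
      have : j + mrad α 1 - 1 + 1 = j + mrad α 1 := by omega
      rw [this, Nat.add_mod_right, Nat.mod_eq_of_lt hj]
    have himg := (h1 1 le_rfl).2.2.2 l j' hj'lt
    rw [hstep] at himg
    rw [← himg] at hzj
    obtain ⟨x, _, hx⟩ := hzj
    exact ⟨x, hx⟩
  -- extended partitions with level 0 = {univ}
  set Q : ℕ → ℕ → Set X := fun i j => if i = 0 then Set.univ else P i j with hQ
  haveI : Nonempty X := by
    obtain ⟨x, _⟩ := ((h1 1 le_rfl).1 0 (hmpos 1)).1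
    exact ⟨x⟩
  have hQP : ∀ i j, 1 ≤ i → Q i j = P i j := by
    intro i j hi
    show (if i = 0 then Set.univ else P i j) = P i j
    rw [if_neg (by omega)]
  have hQ0 : ∀ j, Q 0 j = Set.univ := fun j => by simp [hQ]
  have hne : ∀ i j, j < mrad α i → (Q i j).Nonempty := by
    intro i j hj
    cases i with
    | zero => rw [hQ0]; exact Set.univ_nonempty
    | succ i => rw [hQP _ _ (by omega)]; exact ((h1 (i+1) (by omega)).1 j hj).1
  have hclopen : ∀ i j, j < mrad α i → IsClopen (Q i j) := by
    intro i j hj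
    cases i with
    | zero => rw [hQ0]; exact isClopen_univ
    | succ i => rw [hQP _ _ (by omega)]; exact ((h1 (i+1) (by omega)).1 j hj).2
  have huniq : ∀ i j k, j < mrad α i → k < mrad α i → (Q i j ∩ Q i k).Nonempty → j = k := by
    intro i j k hj hk hne'
    cases i with
    | zero =>
      have h0 : mrad α 0 = 1 := rfl
      omega
    | succ i =>
      by_contra hjk
      have hd := (h1 (i+1) (by omega)).2.1 j hj k hk hjk
      rw [hQP _ _ (by omega), hQP _ _ (by omega)] at hne'
      obtain ⟨x, hx1, hx2⟩ := hne'
      exact (Set.disjoint_left.mp hd hx1) hx2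
  have hcov : ∀ i (x : X), ∃ j, j < mrad α i ∧ x ∈ Q i j := by
    intro i x
    cases i with
    | zero => exact ⟨0, hmpos 0, by rw [hQ0]; trivial⟩
    | succ i =>
      have hx : x ∈ ⋃ j ∈ Finset.range (mrad α (i+1)), P (i+1) j := by
        rw [(h1 (i+1) (by omega)).2.2.1]; trivial
      simp only [Set.mem_iUnion, Finset.mem_range, exists_prop] at hx
      obtain ⟨j, hj, hxj⟩ := hx
      exact ⟨j, hj, by rw [hQP _ _ (by omega)]; exact hxj⟩
  have hcyc : ∀ i (l : Λ) j, j < mrad α i → f l '' Q i j = Q i ((j + 1) % mrad α i) := by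
    intro i l j hj
    cases i with
    | zero =>
      rw [hQ0, hQ0, Set.image_univ, Set.range_eq_univ]
      exact hsurj l
    | succ i =>
      rw [hQP _ _ (by omega), hQP _ _ (by omega)]
      exact (h1 (i+1) (by omega)).2.2.2 l j hj
  -- each piece of level i+1 is inside a unique piece of level i
  have hkex : ∀ i j, ∃ k, k < mrad α i ∧ (j < mrad α (i+1) → Q (i+1) j ⊆ Q i k) := by
    intro i j
    by_cases hj : j < mrad α (i+1)
    · obtain ⟨x, hx⟩ := hne (i+1) j hj
      obtain ⟨k, hk, hxk⟩ := hcov i x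
      refine ⟨k, hk, fun _ => ?_⟩
      cases i with
      | zero => rw [hQ0]; exact Set.subset_univ _
      | succ i =>
        have hi1 : (1:ℕ) ≤ i+1 := by omega
        rw [hQP (i+2) j (by omega)] at hx ⊢
        rw [hQP (i+1) k hi1] at hxk ⊢
        have h2' := h2 (i+1) hi1 k hk
        rw [h2'] at hxk
        simp only [Set.mem_iUnion, Set.mem_setOf_eq, exists_prop] at hxk
        obtain ⟨j', ⟨hj', hsub'⟩, hxj'⟩ := hxk
        have hjj : j' = j := huniq (i+2) j' j hj' hj
          ⟨x, by rw [hQP (i+2) j' (by omega)]; exact hxj', hx⟩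
        rw [← hjj]
        exact hsub'
    · exact ⟨0, hmpos i, fun h => absurd h hj⟩
  choose kmap hklt hksub using hkex
  have hkuniq : ∀ i j k, j < mrad α (i+1) → k < mrad α i → Q (i+1) j ⊆ Q i k → kmap i j = k := by
    intro i j k hj hk hsub
    obtain ⟨x, hx⟩ := hne (i+1) j hj
    exact huniq i (kmap i j) k (hklt i j) hk ⟨x, hksub i j hj hx, hsub hx⟩
  have hkstep : ∀ i j, j + 1 < mrad α (i+1) → kmap i (j+1) = (kmap i j + 1) % mrad α i := by
    intro i j hj1
    have hj : j < mrad α (i+1) := by omega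
    have himg := hcyc (i+1) l₀ j hj
    have himg' := hcyc i l₀ (kmap i j) (hklt i j)
    have hsub' : Q (i+1) ((j+1) % mrad α (i+1)) ⊆ Q i ((kmap i j + 1) % mrad α i) := by
      rw [← himg, ← himg']
      exact Set.image_mono (hksub i j hj)
    rw [Nat.mod_eq_of_lt hj1] at hsub'
    exact hkuniq i (j+1) _ hj1 (Nat.mod_lt _ (hmpos i)) hsub'
  have hkform : ∀ i j, j < mrad α (i+1) → kmap i j = (kmap i 0 + j) % mrad α i := by
    intro i j
    induction j with
    | zero => intro _; rw [Nat.add_zero, Nat.mod_eq_of_lt (hklt i 0)]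
    | succ j ih =>
      intro hj1
      rw [hkstep i j hj1, ih (by omega), Nat.mod_add_mod, Nat.add_assoc]
  -- the shift sequence aligning consecutive levels
  set s : ℕ → ℕ := fun n => Nat.rec 0 (fun i acc => acc + kmap i 0) n with hs
  have hssucc : ∀ i, s (i+1) = s i + kmap i 0 := fun i => rfl
  -- indices
  choose idx hidxlt hidxmem using hcov
  have hidxuniq : ∀ i (x : X) j, j < mrad α i → x ∈ Q i j → idx i x = j := by
    intro i x j hj hx
    exact huniq i (idx i x) j (hidxlt i x) hj ⟨x, hidxmem i x, hx⟩
  -- the coherent index sequence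
  set J : ℕ → X → ℕ := fun i x => (idx i x + s i) % mrad α i with hJdef
  have hJlt : ∀ i (x : X), J i x < mrad α i := fun i x => Nat.mod_lt _ (hmpos i)
  have hidxrel : ∀ i (x : X), idx i x = (kmap i 0 + idx (i+1) x) % mrad α i := by
    intro i x
    have hmem := hidxmem (i+1) x
    have hsub' := hksub i (idx (i+1) x) (hidxlt (i+1) x)
    have h := hidxuniq i x (kmap i (idx (i+1) x)) (hklt i _) (hsub' hmem)
    rw [h, hkform i _ (hidxlt (i+1) x)]
  have hcoh : ∀ i (x : X), J (i+1) x % mrad α i = J i x := by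
    intro i x
    show (idx (i+1) x + s (i+1)) % mrad α (i+1) % mrad α i = (idx i x + s i) % mrad α i
    rw [Nat.mod_mod_of_dvd _ ⟨α i, hmsucc i⟩, hssucc i, hidxrel i x, Nat.mod_add_mod]
    congr 1
    ring
  have hidxf : ∀ i (l : Λ) (x : X), idx i (f l x) = (idx i x + 1) % mrad α i := by
    intro i l x
    have himg := hcyc i l (idx i x) (hidxlt i x)
    have hmem : f l x ∈ Q i ((idx i x + 1) % mrad α i) := by
      rw [← himg]; exact Set.mem_image_of_mem _ (hidxmem i x)
    exact hidxuniq i (f l x) _ (Nat.mod_lt _ (hmpos i)) hmem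
  have hJf : ∀ i (l : Λ) (x : X), J i (f l x) = (J i x + 1) % mrad α i := by
    intro i l x
    show (idx i (f l x) + s i) % mrad α i = ((idx i x + s i) % mrad α i + 1) % mrad α i
    rw [hidxf i l x, Nat.mod_add_mod, Nat.mod_add_mod]
    congr 1
    ring
  have hJF : ∀ (σ : ℕ → Λ) i n (x : X), J i (ifsComp f σ n x) = (J i x + n) % mrad α i := by
    intro σ i n x
    induction n with
    | zero =>
      show J i x = (J i x + 0) % mrad α i
      rw [Nat.add_zero, Nat.mod_eq_of_lt (hJlt i x)]
    | succ n ih =>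
      show J i (f (σ n) (ifsComp f σ n x)) = (J i x + (n+1)) % mrad α i
      rw [hJf i (σ n) _, ih, Nat.mod_add_mod, Nat.add_assoc]
  -- the digit map
  have hdiglt : ∀ i (x : X), J (i+1) x / mrad α i < α i := by
    intro i x
    have h := hJlt (i+1) x
    rw [hmsucc i] at h
    have h2 : J (i+1) x < α i * mrad α i := by rw [Nat.mul_comm]; exact h
    exact (Nat.div_lt_iff_lt_mul (hmpos i)).mpr h2
  set hD : X → (∀ i, Fin (α i)) := fun x i => ⟨J (i+1) x / mrad α i, hdiglt i x⟩ with hhD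
  have hvalhD : ∀ i (x : X), val α i (hD x) = J i x := by
    intro i x
    induction i with
    | zero =>
      rw [val_zero]
      show 0 = (idx 0 x + s 0) % mrad α 0
      have h0 : mrad α 0 = 1 := rfl
      rw [h0, Nat.mod_one]
    | succ i ih =>
      rw [val_succ, ih]
      show J i x + (J (i+1) x / mrad α i) * mrad α i = J (i+1) x
      rw [← hcoh i x]
      exact Nat.mod_add_div' _ _
  have hDF : ∀ (σ : ℕ → Λ) n (x : X), hD (ifsComp f σ n x) = (addingMachine α)^[n] (hD x) := by
    intro σ n x
    apply eq_of_forall_val_eq hα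
    intro i
    rw [hvalhD i _, val_iterate hα i n (hD x), hvalhD i x, hJF σ i n x]
  -- injectivity
  have hinj : Function.Injective hD := by
    intro x y hxy
    have hJeq : ∀ i, J i x = J i y := by
      intro i
      rw [← hvalhD i x, ← hvalhD i y, hxy]
    have hidxeq : ∀ i, idx i x = idx i y := by
      intro i
      have h' : idx i x ≡ idx i y [MOD mrad α i] := Nat.ModEq.add_right_cancel' (s i) (hJeq i)
      calc idx i x = idx i x % mrad α i := (Nat.mod_eq_of_lt (hidxlt i x)).symm
        _ = idx i y % mrad α i := h'
        _ = idx i y := Nat.mod_eq_of_lt (hidxlt i y)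
    obtain ⟨z, hz⟩ := h3 (fun i => Q i (idx i x))
      (fun i hi => ⟨idx i x, hidxlt i x, hQP i _ hi⟩)
      (fun i _hi w hw => by
        have hw' : w ∈ Q (i+1) (idx (i+1) x) := hw
        have hsub' := hksub i (idx (i+1) x) (hidxlt (i+1) x)
        have hkx : kmap i (idx (i+1) x) = idx i x := by
          rw [hidxrel i x]
          exact hkform i _ (hidxlt (i+1) x)
        show w ∈ Q i (idx i x)
        rw [← hkx]
        exact hsub' hw')
    have hxz : x ∈ ({z} : Set X) := by
      rw [← hz]
      exact Set.mem_iInter.mpr fun i => Set.mem_iInter.mpr fun _ => hidxmem i x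
    have hyz : y ∈ ({z} : Set X) := by
      rw [← hz]
      refine Set.mem_iInter.mpr fun i => Set.mem_iInter.mpr fun _ => ?_
      rw [hidxeq i]
      exact hidxmem i y
    rw [Set.mem_singleton_iff] at hxz hyz
    rw [hxz, hyz]
  -- surjectivity
  have hsurjD : Function.Surjective hD := by
    intro r
    have hridx : ∀ i, ∃ j, j < mrad α i ∧ (j + s i) % mrad α i = val α i r := by
      intro i
      set t := s i % mrad α i with ht
      have htlt : t < mrad α i := Nat.mod_lt _ (hmpos i)
      refine ⟨(val α i r + (mrad α i - t)) % mrad α i, Nat.mod_lt _ (hmpos i), ?_⟩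
      rw [Nat.mod_add_mod]
      have hmeq : val α i r + (mrad α i - t) + s i ≡ val α i r + (mrad α i - t) + t
          [MOD mrad α i] := ((Nat.mod_modEq (s i) (mrad α i)).symm).add_left _
      have h2 : val α i r + (mrad α i - t) + t = val α i r + mrad α i := by omega
      calc (val α i r + (mrad α i - t) + s i) % mrad α i
          = (val α i r + (mrad α i - t) + t) % mrad α i := hmeq
        _ = (val α i r + mrad α i) % mrad α i := by rw [h2]
        _ = val α i r % mrad α i := Nat.add_mod_right _ _
        _ = val α i r := Nat.mod_eq_of_lt (val_lt hα i r)
    choose ridx hridxlt hridxval using hridx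
    have hrnested : ∀ i, Q (i+1) (ridx (i+1)) ⊆ Q i (ridx i) := by
      intro i
      have hsub' := hksub i (ridx (i+1)) (hridxlt (i+1))
      have hkval : kmap i (ridx (i+1)) = ridx i := by
        have h1 : (kmap i (ridx (i+1)) + s i) % mrad α i = val α i r := by
          rw [hkform i _ (hridxlt (i+1)), Nat.mod_add_mod]
          have h2' : kmap i 0 + ridx (i+1) + s i = ridx (i+1) + s (i+1) := by
            rw [hssucc]; ring
          rw [h2']
          have h3' : (ridx (i+1) + s (i+1)) % mrad α i
              = (ridx (i+1) + s (i+1)) % mrad α (i+1) % mrad α i :=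
            (Nat.mod_mod_of_dvd _ ⟨α i, hmsucc i⟩).symm
          rw [h3', hridxval (i+1), ← val_mod hα i r]
        have h7 : kmap i (ridx (i+1)) ≡ ridx i [MOD mrad α i] :=
          Nat.ModEq.add_right_cancel' (s i) (h1.trans (hridxval i).symm)
        calc kmap i (ridx (i+1)) = kmap i (ridx (i+1)) % mrad α i :=
              (Nat.mod_eq_of_lt (hklt i _)).symm
          _ = ridx i % mrad α i := h7
          _ = ridx i := Nat.mod_eq_of_lt (hridxlt i)
      rw [← hkval]
      exact hsub'
    obtain ⟨z, hz⟩ := h3 (fun i => Q i (ridx i))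
      (fun i hi => ⟨ridx i, hridxlt i, hQP i _ hi⟩)
      (fun i _hi => hrnested i)
    refine ⟨z, ?_⟩
    apply eq_of_forall_val_eq hα
    intro i
    rw [hvalhD]
    have hzin : z ∈ ⋂ i, ⋂ (_ : 1 ≤ i), Q i (ridx i) := hz ▸ rfl
    have hzmem : z ∈ Q i (ridx i) := by
      cases i with
      | zero => rw [hQ0]; trivial
      | succ i => exact Set.mem_iInter.mp (Set.mem_iInter.mp hzin (i+1)) (by omega)
    have hiz : idx i z = ridx i := hidxuniq i z (ridx i) (hridxlt i) hzmem
    show (idx i z + s i) % mrad α i = val α i r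
    rw [hiz]
    exact hridxval i
  -- continuity
  have hcont : Continuous hD := by
    apply continuous_pi
    intro i
    apply IsLocallyConstant.continuous
    rw [IsLocallyConstant.iff_exists_open]
    intro x
    refine ⟨Q (i+1) (idx (i+1) x), (hclopen (i+1) _ (hidxlt (i+1) x)).isOpen,
      hidxmem (i+1) x, ?_⟩
    intro y hy
    have hixy : idx (i+1) y = idx (i+1) x := hidxuniq (i+1) y _ (hidxlt (i+1) x) hy
    have hJy : J (i+1) y = J (i+1) x := by
      show (idx (i+1) y + s (i+1)) % mrad α (i+1) = (idx (i+1) x + s (i+1)) % mrad α (i+1)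
      rw [hixy]
    show (⟨J (i+1) y / mrad α i, hdiglt i y⟩ : Fin (α i)) = ⟨J (i+1) x / mrad α i, hdiglt i x⟩
    exact Fin.ext (congrArg (· / mrad α i) hJy)
  -- assemble
  intro σ
  refine ⟨Continuous.homeoOfEquivCompactToT2 (f := Equiv.ofBijective hD ⟨hinj, hsurjD⟩) hcont, ?_⟩
  intro n _hn
  funext x
  show (addingMachine α)^[n] (hD x) = hD (ifsComp f σ n x)
  exact (hDF σ n x).symm

end Backward

/-- Theorem 3.5. -/
theorem ifs_conjugate_adding_machine_iff {X Λ : Type*} [MetricSpace X] [CompactSpace X]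
    [Finite Λ] [Nonempty Λ] (f : Λ → X → X) (hf : ∀ l : Λ, Continuous (f l))
    (α : ℕ → ℕ) (hα : ∀ i, 2 ≤ α i) (m : ℕ → ℕ)
    (hm : ∀ i, m i = ∏ k ∈ Finset.range i, α k) :
    (∀ σ : ℕ → Λ, ∃ h : X ≃ₜ (∀ i, Fin (α i)),
        ∀ n : ℕ, 1 ≤ n → (addingMachine α)^[n] ∘ h = h ∘ ifsComp f σ n) ↔
      ∃ P : ℕ → ℕ → Set X,
        (∀ i, 1 ≤ i →
          (∀ j, j < m i → (P i j).Nonempty ∧ IsClopen (P i j)) ∧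
          (∀ j, j < m i → ∀ k, k < m i → j ≠ k → Disjoint (P i j) (P i k)) ∧
          (⋃ j ∈ Finset.range (m i), P i j) = Set.univ ∧
          (∀ (l : Λ) (j : ℕ), j < m i → f l '' P i j = P i ((j + 1) % m i))) ∧
        (∀ i, 1 ≤ i → ∀ k, k < m i →
          P i k = ⋃ j ∈ {j : ℕ | j < m (i + 1) ∧ P (i + 1) j ⊆ P i k}, P (i + 1) j) ∧
        (∀ V : ℕ → Set X, (∀ i, 1 ≤ i → ∃ j, j < m i ∧ V i = P i j) →
          (∀ i, 1 ≤ i → V (i + 1) ⊆ V i) →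
          ∃ x : X, (⋂ i, ⋂ (_ : 1 ≤ i), V i) = {x}) := by
  have hm' : m = Odo.mrad α := funext hm
  subst hm'
  constructor
  · intro H
    exact forward_dir hα H
  · rintro ⟨P, h1, h2, h3⟩ σ
    exact backward_dir hα P h1 h2 h3 σ
end

section
/- Let f : X → X be a continuous map of a compact metric space, let α = (j₁,j₂,…) be a sequence of integers greater than 1 with m_i = j₁·⋯·j_i, and suppose the single-map IFS {X; f} satisfies: (1) for each positive integer i there is a cover P_i of X consisting of m_i pairwise disjoint, nonempty, clopen sets cyclically permuted by f (f maps each element of P_i onto the next, cyclically); (2) P_{i+1} partitions P_i for each i; (3) every nested sequence V₁ ⊇ V₂ ⊇ … with V_i ∈ P_i has intersection a single point. Then the topological entropy of f is zero. -/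
open Set Function Topology

/-- Remark 3.9: a single map satisfying the adding-machine structure conditions
has zero topological entropy. -/
theorem adding_machine_structure_zero_entropy {X : Type*} [MetricSpace X] [CompactSpace X]
    (f : X → X) (hf : Continuous f)
    (α : ℕ → ℕ) (hα : ∀ i, 2 ≤ α i) (m : ℕ → ℕ)
    (hm : ∀ i, m i = ∏ k ∈ Finset.range i, α k)
    (P : ℕ → ℕ → Set X)
    (h1 : ∀ i, 1 ≤ i →
      (∀ j, j < m i → (P i j).Nonempty ∧ IsClopen (P i j)) ∧
      (∀ j, j < m i → ∀ k, k < m i → j ≠ k → Disjoint (P i j) (P i k)) ∧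
      (⋃ j ∈ Finset.range (m i), P i j) = Set.univ ∧
      (∀ j, j < m i → f '' P i j = P i ((j + 1) % m i)))
    (h2 : ∀ i, 1 ≤ i → ∀ k, k < m i →
      P i k = ⋃ j ∈ {j : ℕ | j < m (i + 1) ∧ P (i + 1) j ⊆ P i k}, P (i + 1) j)
    (h3 : ∀ V : ℕ → Set X, (∀ i, 1 ≤ i → ∃ j, j < m i ∧ V i = P i j) →
      (∀ i, 1 ≤ i → V (i + 1) ⊆ V i) →
      ∃ x : X, (⋂ i, ⋂ (_ : 1 ≤ i), V i) = {x}) :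
    Dynamics.coverEntropy f Set.univ = 0 := by
  classical
  have hm1 : ∀ i, 0 < m i := by
    intro i; rw [hm]
    exact Finset.prod_pos fun k _ => lt_of_lt_of_le two_pos (hα k)
  have hX : (Set.univ : Set X).Nonempty := by
    obtain ⟨x, -⟩ := ((h1 1 le_rfl).1 0 (hm1 1)).1
    exact ⟨x, trivial⟩
  -- uniqueness of the piece containing a point
  have huniq : ∀ i, 1 ≤ i → ∀ j k, j < m i → k < m i → ∀ x : X,
      x ∈ P i j → x ∈ P i k → j = k := by
    intro i hi j k hj hk x hxj hxk
    by_contra hne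
    exact ((h1 i hi).2.1 j hj k hk hne).ne_of_mem hxj hxk rfl
  -- existence of the piece containing a point
  have hex : ∀ i, 1 ≤ i → ∀ x : X, ∃ j, j < m i ∧ x ∈ P i j := by
    intro i hi x
    have hx : x ∈ ⋃ j ∈ Finset.range (m i), P i j := (h1 i hi).2.2.1 ▸ mem_univ x
    simp only [mem_iUnion, Finset.mem_range, exists_prop] at hx
    exact hx
  -- one-step refinement
  have href1 : ∀ i, 1 ≤ i → ∀ j, j < m (i + 1) → ∃ k, k < m i ∧ P (i + 1) j ⊆ P i k := by
    intro i hi j hj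
    obtain ⟨x, hx⟩ := ((h1 (i + 1) (by omega)).1 j hj).1
    obtain ⟨k, hk, hxk⟩ := hex i hi x
    refine ⟨k, hk, ?_⟩
    have hx' : x ∈ ⋃ j' ∈ {j' : ℕ | j' < m (i + 1) ∧ P (i + 1) j' ⊆ P i k}, P (i + 1) j' :=
      (h2 i hi k hk) ▸ hxk
    simp only [mem_iUnion, mem_setOf_eq, exists_prop] at hx'
    obtain ⟨j', ⟨hj', hsub⟩, hxj'⟩ := hx'
    rwa [huniq (i + 1) (by omega) j j' hj hj' x hx hxj']
  -- general refinement
  have href : ∀ i, 1 ≤ i → ∀ d j, j < m (i + d) → ∃ k, k < m i ∧ P (i + d) j ⊆ P i k := by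
    intro i hi d
    induction d with
    | zero => exact fun j hj => ⟨j, hj, subset_rfl⟩
    | succ d ih =>
      intro j hj
      obtain ⟨k', hk', hsub'⟩ := href1 (i + d) (by omega) j hj
      obtain ⟨k, hk, hsub⟩ := ih k' hk'
      exact ⟨k, hk, hsub'.trans hsub⟩
  -- cyclic behaviour of iterates
  have hiter : ∀ i, 1 ≤ i → ∀ j, j < m i → ∀ x : X, x ∈ P i j →
      ∀ k : ℕ, f^[k] x ∈ P i ((j + k) % m i) := by
    intro i hi j hj x hx k
    induction k with
    | zero => simpa [Nat.mod_eq_of_lt hj] using hx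
    | succ k ih =>
      rw [Function.iterate_succ_apply']
      have himg := (h1 i hi).2.2.2 ((j + k) % m i) (Nat.mod_lt _ (hm1 i))
      have hmem : f (f^[k] x) ∈ f '' P i ((j + k) % m i) := mem_image_of_mem f ih
      rw [himg] at hmem
      have heq : ((j + k) % m i + 1) % m i = (j + (k + 1)) % m i := by
        conv_rhs => rw [← Nat.add_assoc, Nat.add_mod (j + k) 1 (m i)]
        rw [Nat.add_mod ((j + k) % m i) 1 (m i), Nat.mod_mod_of_dvd _ dvd_rfl]
      rwa [heq] at hmem
  -- choose the index of the piece containing a point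
  have hexch : ∀ (i : ℕ) (x : X), ∃ j, 1 ≤ i → j < m i ∧ x ∈ P i j := by
    intro i x
    by_cases hi : 1 ≤ i
    · obtain ⟨j, h⟩ := hex i hi x; exact ⟨j, fun _ => h⟩
    · exact ⟨0, fun h => absurd h hi⟩
  choose idx hidx using hexch
  -- uniform smallness of pieces
  have hsmall : ∀ ε : ℝ, 0 < ε → ∃ I, 1 ≤ I ∧ ∀ j, j < m I →
      ∀ x ∈ P I j, ∀ y ∈ P I j, dist x y < ε := by
    intro ε hε
    have key : ∀ x : X, ∃ i, 1 ≤ i ∧ P i (idx i x) ⊆ Metric.ball x (ε / 3) := by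
      intro x
      set V : ℕ → Set X := fun i => if 1 ≤ i then P i (idx i x) else Set.univ with hV
      have hVmem : ∀ i, 1 ≤ i → V i = P i (idx i x) := fun i hi => if_pos hi
      have hVnest : ∀ i, 1 ≤ i → V (i + 1) ⊆ V i := by
        intro i hi
        rw [hVmem (i + 1) (by omega), hVmem i hi]
        obtain ⟨k, hk, hsub⟩ := href1 i hi (idx (i + 1) x) (hidx (i + 1) x (by omega)).1
        have hxk : x ∈ P i k := hsub (hidx (i + 1) x (by omega)).2
        rwa [huniq i hi k (idx i x) hk (hidx i x hi).1 x hxk (hidx i x hi).2] at hsub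
      obtain ⟨y, hy⟩ := h3 V (fun i hi => ⟨idx i x, (hidx i x hi).1, hVmem i hi⟩) hVnest
      have hxy : x = y := by
        have hx : x ∈ ⋂ i, ⋂ (_ : 1 ≤ i), V i := by
          simp only [mem_iInter]
          exact fun i hi => (hVmem i hi) ▸ (hidx i x hi).2
        rw [hy] at hx; exact hx
      rw [← hxy] at hy
      by_contra hcon
      push_neg at hcon
      set G := Metric.ball x (ε / 3) with hG
      have hWne : ∀ n : ℕ, (V (n + 1) \ G).Nonempty := by
        intro n
        rw [hVmem (n + 1) (by omega)]
        rcases Set.not_subset.1 (hcon (n + 1) (by omega)) with ⟨z, hz1, hz2⟩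
        exact ⟨z, hz1, hz2⟩
      have hWclosed : ∀ n : ℕ, IsClosed (V (n + 1) \ G) := by
        intro n
        rw [hVmem (n + 1) (by omega)]
        exact IsClosed.sdiff
          (((h1 (n + 1) (by omega)).1 _ (hidx (n + 1) x (by omega)).1).2.isClosed)
          Metric.isOpen_ball
      have hWnest : ∀ n : ℕ, V (n + 1 + 1) \ G ⊆ V (n + 1) \ G := fun n =>
        diff_subset_diff_left (hVnest (n + 1) (by omega))
      obtain ⟨z, hz⟩ := IsCompact.nonempty_iInter_of_sequence_nonempty_isCompact_isClosed
        (fun n => V (n + 1) \ G) hWnest hWne ((hWclosed 0).isCompact) hWclosed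
      simp only [mem_iInter, mem_diff] at hz
      have hzV : z ∈ ⋂ i, ⋂ (_ : 1 ≤ i), V i := by
        simp only [mem_iInter]
        intro i hi
        obtain ⟨n, rfl⟩ : ∃ n, i = n + 1 := ⟨i - 1, by omega⟩
        exact (hz n).1
      rw [hy, mem_singleton_iff] at hzV
      exact (hz 0).2 (hzV ▸ Metric.mem_ball_self (by linarith))
    choose lev hlev1 hlev2 using key
    have hopen : ∀ x : X, IsOpen (P (lev x) (idx (lev x) x)) := fun x =>
      (((h1 (lev x) (hlev1 x)).1 _ (hidx (lev x) x (hlev1 x)).1).2).isOpen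
    have hcover : (Set.univ : Set X) ⊆ ⋃ x : X, P (lev x) (idx (lev x) x) :=
      fun x _ => mem_iUnion.2 ⟨x, (hidx (lev x) x (hlev1 x)).2⟩
    obtain ⟨t, ht⟩ := isCompact_univ.elim_finite_subcover
      (fun x : X => P (lev x) (idx (lev x) x)) hopen hcover
    refine ⟨t.sup lev + 1, by omega, ?_⟩
    set I := t.sup lev + 1 with hIdef
    intro j hj a ha b hb
    have haU : a ∈ ⋃ x ∈ t, P (lev x) (idx (lev x) x) := ht (mem_univ a)
    simp only [mem_iUnion, exists_prop] at haU
    obtain ⟨x₀, hx₀t, hax₀⟩ := haU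
    have hle : lev x₀ ≤ I := le_trans (Finset.le_sup hx₀t) (by omega)
    obtain ⟨d, hd⟩ : ∃ d, I = lev x₀ + d := ⟨I - lev x₀, by omega⟩
    rw [hd] at hj
    obtain ⟨k, hk, hsub⟩ := href (lev x₀) (hlev1 x₀) d j hj
    have hak : a ∈ P (lev x₀) k := hsub (hd ▸ ha)
    have hkeq : k = idx (lev x₀) x₀ :=
      huniq (lev x₀) (hlev1 x₀) k _ hk (hidx (lev x₀) x₀ (hlev1 x₀)).1 a hak hax₀
    rw [hkeq] at hsub
    have hsub' : P I j ⊆ Metric.ball x₀ (ε / 3) := by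
      rw [hd]; exact hsub.trans (hlev2 x₀)
    have h1' := hsub' ha
    have h2' := hsub' hb
    rw [Metric.mem_ball] at h1' h2'
    calc dist a b ≤ dist a x₀ + dist x₀ b := dist_triangle a x₀ b
      _ < ε / 3 + ε / 3 := by rw [dist_comm x₀ b]; exact add_lt_add h1' h2'
      _ < ε := by linarith
  -- conclude: entropy is zero
  apply le_antisymm
  · apply iSup₂_le
    intro U hU
    obtain ⟨ε, hε, hUε⟩ := Metric.mem_uniformity_dist.1 hU
    obtain ⟨I, hI1, hId⟩ := hsmall ε hε
    have hpts : ∀ j : ℕ, ∃ p : X, j < m I → p ∈ P I j := by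
      intro j
      by_cases hj : j < m I
      · obtain ⟨p, hp⟩ := ((h1 I hI1).1 j hj).1; exact ⟨p, fun _ => hp⟩
      · exact ⟨hX.choose, fun h => absurd h hj⟩
    choose pt hpt using hpts
    set s : Finset X := (Finset.range (m I)).image pt with hs
    have hcov : ∀ n : ℕ, Dynamics.IsDynCoverOf f Set.univ U n (s : Set X) := by
      intro n y _
      obtain ⟨j, hj, hyj⟩ := hex I hI1 y
      refine ⟨pt j, ?_, ?_⟩
      · exact Finset.mem_coe.2 (Finset.mem_image.2 ⟨j, Finset.mem_range.2 hj, rfl⟩)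
      · rw [Dynamics.mem_dynEntourage]
        intro k _
        have h1k := hiter I hI1 j hj (pt j) (hpt j hj) k
        have h2k := hiter I hI1 j hj y hyj k
        exact hUε (hId ((j + k) % m I) (Nat.mod_lt _ (hm1 I)) _ h2k _ h1k)
    have hbound : ∀ n : ℕ, Dynamics.coverMincard f Set.univ U n ≤ (m I : ℕ∞) := by
      intro n
      refine le_trans (Dynamics.IsDynCoverOf.coverMincard_le_card (hcov n)) ?_
      exact_mod_cast Finset.card_image_le.trans (le_of_eq (Finset.card_range (m I)))
    have hC0 : ENNReal.log ((m I : ℕ∞) : ENNReal) ≠ ⊥ := by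
      simp only [ne_eq, ENNReal.log_eq_bot_iff]
      simp [(hm1 I).ne']
    have hCtop : ENNReal.log ((m I : ℕ∞) : ENNReal) ≠ ⊤ := by
      simp only [ne_eq, ENNReal.log_eq_top_iff]
      simp
    have hlim : Filter.Tendsto (fun n : ℕ => ENNReal.log ((m I : ℕ∞) : ENNReal) / (n : EReal))
        Filter.atTop (𝓝 0) :=
      EReal.tendsto_const_div_atTop_nhds_zero_nat hC0 hCtop
    calc Dynamics.coverEntropyEntourage f Set.univ U
        ≤ Filter.atTop.limsup (fun n : ℕ => ENNReal.log ((m I : ℕ∞) : ENNReal) / (n : EReal)) := by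
          exact Filter.limsup_le_limsup (Filter.Eventually.of_forall fun n =>
            EReal.monotone_div_right_of_nonneg (Nat.cast_nonneg' n)
              (ENNReal.log_monotone (ENat.toENNReal_mono (hbound n))))
      _ = 0 := hlim.limsup_eq
  · calc (0 : EReal) ≤ Dynamics.coverEntropyEntourage f Set.univ Set.univ :=
          Dynamics.coverEntropyEntourage_nonneg f hX Set.univ
      _ ≤ Dynamics.coverEntropy f Set.univ :=
          Dynamics.coverEntropyEntourage_le_coverEntropy f Set.univ Filter.univ_mem
end
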